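/- Let 0 < m₂ ≤ a ≤ m₁ < M₁ ≤ b ≤ M₂ be positive reals and let v be real with v ∉ [0,1]. Then ((m₁^{1-v}·M₁^v)/((1-v)·m₁ + v·M₁)) · ((1-v)·a + v·b) ≤ a^{1-v}·b^v ≤ ((m₂^{1-v}·M₂^v)/((1-v)·m₂ + v·M₂)) · ((1-v)·a + v·b). -/

import Mathlib

open Real Set

lemma Hmono (v : ℝ) (hv : v < 0 ∨ 1 < v) :
    AntitoneOn (fun x : ℝ => (1 - v) * x ^ (-v) + v * x ^ (1 - v)) (Set.Ici (1:ℝ)) := by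
  have hderiv : ∀ x : ℝ, 0 < x →
      HasDerivAt (fun x : ℝ => (1 - v) * x ^ (-v) + v * x ^ (1 - v))
        ((1 - v) * (-v * x ^ (-v - 1)) + v * ((1 - v) * x ^ (1 - v - 1))) x := by
    intro x hx
    exact ((Real.hasDerivAt_rpow_const (Or.inl hx.ne')).const_mul (1 - v)).add
      ((Real.hasDerivAt_rpow_const (Or.inl hx.ne')).const_mul v)
  have hdiff : DifferentiableOn ℝ (fun x : ℝ => (1 - v) * x ^ (-v) + v * x ^ (1 - v))
      (Set.Ici (1:ℝ)) := by
    intro x hx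
    exact ((hderiv x (lt_of_lt_of_le one_pos hx)).differentiableAt).differentiableWithinAt
  apply antitoneOn_of_deriv_nonpos (convex_Ici 1) hdiff.continuousOn
      (hdiff.mono interior_subset)
  intro x hx
  rw [interior_Ici] at hx
  have hx1 : (1:ℝ) < x := hx
  have hx0 : (0:ℝ) < x := lt_trans one_pos hx1
  rw [(hderiv x hx0).deriv]
  have e1 : (1:ℝ) - v - 1 = -v := by ring
  have e2 : x * x ^ (-v - 1) = x ^ (-v) := by
    rw [show x * x ^ (-v - 1) = x ^ (1:ℝ) * x ^ (-v - 1) by rw [Real.rpow_one],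
      ← Real.rpow_add hx0]
    norm_num
  have hp : (0:ℝ) < x ^ (-v - 1) := Real.rpow_pos_of_pos hx0 _
  have hneg : v * (1 - v) < 0 := by
    rcases hv with h | h
    · nlinarith
    · nlinarith
  rw [e1, ← e2]
  nlinarith [mul_pos hp (sub_pos.mpr hx1)]

lemma key (v s t : ℝ) (hv : v < 0 ∨ 1 < v) (hs : 1 ≤ s) (hst : s ≤ t) :
    s ^ v * ((1 - v) + v * t) ≤ t ^ v * ((1 - v) + v * s) := by
  have hs0 : (0:ℝ) < s := lt_of_lt_of_le one_pos hs
  have ht0 : (0:ℝ) < t := lt_of_lt_of_le hs0 hst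
  have h := Hmono v hv (Set.mem_Ici.mpr hs) (Set.mem_Ici.mpr (le_trans hs hst)) hst
  simp only at h
  have e : ∀ x : ℝ, 0 < x → (1 - v) * x ^ (-v) + v * x ^ (1 - v)
      = ((1 - v) + v * x) / x ^ v := by
    intro x hx
    rw [Real.rpow_neg hx.le, show (1:ℝ) - v = 1 + (-v) by ring, Real.rpow_add hx,
      Real.rpow_one, Real.rpow_neg hx.le]
    have : x ^ v ≠ 0 := (Real.rpow_pos_of_pos hx v).ne'
    field_simp
  rw [e t ht0, e s hs0] at h
  rw [div_le_div_iff₀ (Real.rpow_pos_of_pos ht0 v) (Real.rpow_pos_of_pos hs0 v)] at h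
  linarith [h]

theorem geometric_arithmetic_ratio_bounds
    (m₁ m₂ M₁ M₂ a b v : ℝ)
    (hm₂ : 0 < m₂) (h1 : m₂ ≤ a) (h2 : a ≤ m₁) (h3 : m₁ < M₁) (h4 : M₁ ≤ b) (h5 : b ≤ M₂)
    (hv : v < 0 ∨ 1 < v)
    (hpos1 : 0 < (1 - v) * m₁ + v * M₁) (hpos2 : 0 < (1 - v) * m₂ + v * M₂) :
    (m₁ ^ (1 - v) * M₁ ^ v / ((1 - v) * m₁ + v * M₁)) * ((1 - v) * a + v * b)
      ≤ a ^ (1 - v) * b ^ v ∧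
    a ^ (1 - v) * b ^ v
      ≤ (m₂ ^ (1 - v) * M₂ ^ v / ((1 - v) * m₂ + v * M₂)) * ((1 - v) * a + v * b) := by
  have ha : 0 < a := lt_of_lt_of_le hm₂ h1
  have hm₁ : 0 < m₁ := lt_of_lt_of_le ha h2
  have hM₁ : 0 < M₁ := lt_trans hm₁ h3
  have hb : 0 < b := lt_of_lt_of_le hM₁ h4
  have hM₂ : 0 < M₂ := lt_of_lt_of_le hb h5
  have hexp : ∀ x : ℝ, 0 < x → x ^ (1 - v) = x / x ^ v := by
    intro x hx
    rw [show (1:ℝ) - v = 1 + (-v) by ring, Real.rpow_add hx, Real.rpow_one,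
      Real.rpow_neg hx.le, div_eq_mul_inv]
  constructor
  · -- lower bound, s = M₁/m₁, t = b/a
    have hs1 : (1:ℝ) ≤ M₁ / m₁ := le_of_lt ((one_lt_div hm₁).mpr h3)
    have hst : M₁ / m₁ ≤ b / a :=
      div_le_div₀ (le_of_lt hb) h4 ha h2
    have hk := key v (M₁ / m₁) (b / a) hv hs1 hst
    rw [div_mul_eq_mul_div, div_le_iff₀ hpos1]
    have e1 : m₁ ^ (1 - v) * M₁ ^ v * ((1 - v) * a + v * b)
        = (m₁ * a) * ((M₁ / m₁) ^ v * ((1 - v) + v * (b / a))) := by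
      rw [Real.div_rpow hM₁.le hm₁.le, hexp m₁ hm₁]
      have h1' : m₁ ^ v ≠ 0 := (Real.rpow_pos_of_pos hm₁ v).ne'
      field_simp
    have e2 : a ^ (1 - v) * b ^ v * ((1 - v) * m₁ + v * M₁)
        = (m₁ * a) * ((b / a) ^ v * ((1 - v) + v * (M₁ / m₁))) := by
      rw [Real.div_rpow hb.le ha.le, hexp a ha]
      have h1' : a ^ v ≠ 0 := (Real.rpow_pos_of_pos ha v).ne'
      field_simp
    rw [e1, e2]
    exact mul_le_mul_of_nonneg_left hk (by positivity)
  · -- upper bound, s = b/a, t = M₂/m₂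
    have hs1 : (1:ℝ) ≤ b / a :=
      (one_le_div ha).mpr (le_trans h2 (le_trans h3.le h4))
    have hst : b / a ≤ M₂ / m₂ :=
      div_le_div₀ (le_of_lt hM₂) h5 hm₂ h1
    have hk := key v (b / a) (M₂ / m₂) hv hs1 hst
    rw [div_mul_eq_mul_div, le_div_iff₀ hpos2]
    have e1 : a ^ (1 - v) * b ^ v * ((1 - v) * m₂ + v * M₂)
        = (m₂ * a) * ((b / a) ^ v * ((1 - v) + v * (M₂ / m₂))) := by
      rw [Real.div_rpow hb.le ha.le, hexp a ha]
      have h1' : a ^ v ≠ 0 := (Real.rpow_pos_of_pos ha v).ne'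
      field_simp
    have e2 : m₂ ^ (1 - v) * M₂ ^ v * ((1 - v) * a + v * b)
        = (m₂ * a) * ((M₂ / m₂) ^ v * ((1 - v) + v * (b / a))) := by
      rw [Real.div_rpow hM₂.le hm₂.le, hexp m₂ hm₂]
      have h1' : m₂ ^ v ≠ 0 := (Real.rpow_pos_of_pos hm₂ v).ne'
      field_simp
    rw [e1, e2]
    exact mul_le_mul_of_nonneg_left hk (by positivity)
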